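/- The group P defined by the presentation ⟨a, b | b⁻¹a²b = a⁻², a⁻¹b²a = b⁻²⟩ is torsion-free. -/

import Mathlib

/-- Relators of the Promislow (Hantzsche–Wendt) group
`P = ⟨a, b | b⁻¹a²b = a⁻², a⁻¹b²a = b⁻²⟩`, written as
`b⁻¹a²ba²` and `a⁻¹b²ab²` on generators `a = 0`, `b = 1`. -/
def promislowRels : Set (FreeGroup (Fin 2)) :=
  {(FreeGroup.of 1)⁻¹ * (FreeGroup.of 0) ^ 2 * FreeGroup.of 1 * (FreeGroup.of 0) ^ 2,
   (FreeGroup.of 0)⁻¹ * (FreeGroup.of 1) ^ 2 * FreeGroup.of 0 * (FreeGroup.of 1) ^ 2}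

namespace HWaux

abbrev K4 := ZMod 2 × ZMod 2
abbrev V3 := ℤ × ℤ × ℤ

/-- diagonal signs of the point-group element `x` -/
def sv (x : K4) : V3 :=
  (if x.2 = 0 then 1 else -1, if x.1 = 0 then 1 else -1, if x.1 = x.2 then 1 else -1)

/-- action of the point group on ℤ³ -/
def act (x : K4) (v : V3) : V3 :=
  ((sv x).1 * v.1, (sv x).2.1 * v.2.1, (sv x).2.2 * v.2.2)

/-- coset representatives (translation parts, doubled lattice coordinates) -/
def rr (x : K4) : V3 :=
  if x = (0, 0) then (0, 0, 0)
  else if x = (1, 0) then (1, 1, 0)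
  else if x = (0, 1) then (0, 1, 1)
  else (1, 0, 1)

/-- the 2-cocycle -/
def cc (x y : K4) : V3 :=
  (((rr x).1 + (sv x).1 * (rr y).1 - (rr (x + y)).1) / 2,
   ((rr x).2.1 + (sv x).2.1 * (rr y).2.1 - (rr (x + y)).2.1) / 2,
   ((rr x).2.2 + (sv x).2.2 * (rr y).2.2 - (rr (x + y)).2.2) / 2)

lemma act_add (x : K4) (u v : V3) : act x (u + v) = act x u + act x v := by
  simp only [act, Prod.fst_add, Prod.snd_add, Prod.mk_add_mk]
  ring_nf

lemma sv_mul : ∀ x y : K4,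
    sv (x + y) = ((sv x).1 * (sv y).1, (sv x).2.1 * (sv y).2.1, (sv x).2.2 * (sv y).2.2) := by
  decide

lemma act_act (x y : K4) (v : V3) : act x (act y v) = act (x + y) v := by
  simp only [act, sv_mul]
  ring_nf

lemma cocycle : ∀ x y z : K4,
    act x (cc y z) + cc x (y + z) = cc x y + cc (x + y) z := by
  decide

lemma cc_zero_left : ∀ y : K4, cc 0 y = 0 := by decide
lemma cc_zero_right : ∀ x : K4, cc x 0 = 0 := by decide
lemma act_zero (v : V3) : act 0 v = v := by
  simp [act, sv]

/-- carrier of the concrete Hantzsche–Wendt group -/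
structure HW where
  v : V3
  x : K4
deriving DecidableEq

namespace HW

instance : One HW := ⟨⟨0, 0⟩⟩
instance : Mul HW := ⟨fun p q => ⟨p.v + act p.x q.v + cc p.x q.x, p.x + q.x⟩⟩
instance : Inv HW := ⟨fun p => ⟨-(act p.x p.v) - cc p.x p.x, p.x⟩⟩

lemma mul_def (p q : HW) : p * q = ⟨p.v + act p.x q.v + cc p.x q.x, p.x + q.x⟩ := rfl
lemma one_def : (1 : HW) = ⟨0, 0⟩ := rfl
lemma inv_def (p : HW) : p⁻¹ = ⟨-(act p.x p.v) - cc p.x p.x, p.x⟩ := rfl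

instance : Group HW where
  mul_assoc p q r := by
    rcases p with ⟨m, x⟩; rcases q with ⟨n, y⟩; rcases r with ⟨u, z⟩
    simp only [mul_def, act_add, act_act]
    congr 1
    · have hc := cocycle x y z
      linear_combination -hc
    · rw [add_assoc]
  one_mul p := by
    rcases p with ⟨m, x⟩
    simp [mul_def, one_def, act_zero, cc_zero_left]
  mul_one p := by
    rcases p with ⟨m, x⟩
    simp [mul_def, one_def, cc_zero_right, act]
  inv_mul_cancel p := by
    rcases p with ⟨m, x⟩
    simp only [mul_def, inv_def, one_def]
    congr 1
    · abel
    · exact (by decide : ∀ x : K4, x + x = 0) x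

lemma k4_self (x : K4) : x + x = 0 := by revert x; decide

lemma pow_trans (v : V3) (n : ℕ) : (HW.mk v 0) ^ n = HW.mk (n • v) 0 := by
  induction n with
  | zero => simp [one_def]
  | succ k ih =>
    rw [pow_succ, ih, mul_def]
    simp [act_zero, cc_zero_left, add_smul, one_smul, add_comm]

lemma sq_eq (p : HW) : p ^ 2 = HW.mk (p.v + act p.x p.v + cc p.x p.x) 0 := by
  rw [pow_two, mul_def, k4_self]

lemma k4_cases : ∀ x : K4, x = 0 ∨ x = (1, 0) ∨ x = (0, 1) ∨ x = (1, 1) := by decide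

lemma crux (m : V3) (x : K4) (h : m + act x m + cc x x = 0) : HW.mk m x = 1 := by
  rcases m with ⟨m1, m2, m3⟩
  rcases k4_cases x with rfl | rfl | rfl | rfl
  · have hs : sv (0 : K4) = (1, 1, 1) := by decide
    have hc : cc (0 : K4) 0 = 0 := by decide
    simp only [act, hs, hc, add_zero, one_mul, Prod.mk_add_mk,
      show (0 : V3) = ((0 : ℤ), (0 : ℤ), (0 : ℤ)) from rfl, Prod.mk.injEq] at h
    obtain ⟨rfl, rfl, rfl⟩ : m1 = 0 ∧ m2 = 0 ∧ m3 = 0 := by omega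
    rfl
  · have hs : sv ((1, 0) : K4) = (1, -1, -1) := by decide
    have hc : cc ((1, 0) : K4) (1, 0) = (1, 0, 0) := by decide
    simp only [act, hs, hc, Prod.mk_add_mk,
      show (0 : V3) = ((0 : ℤ), (0 : ℤ), (0 : ℤ)) from rfl, Prod.mk.injEq] at h
    exact absurd h.1 (by omega)
  · have hs : sv ((0, 1) : K4) = (-1, 1, -1) := by decide
    have hc : cc ((0, 1) : K4) (0, 1) = (0, 1, 0) := by decide
    simp only [act, hs, hc, Prod.mk_add_mk,
      show (0 : V3) = ((0 : ℤ), (0 : ℤ), (0 : ℤ)) from rfl, Prod.mk.injEq] at h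
    exact absurd h.2.1 (by omega)
  · have hs : sv ((1, 1) : K4) = (-1, -1, 1) := by decide
    have hc : cc ((1, 1) : K4) (1, 1) = (0, 0, 1) := by decide
    simp only [act, hs, hc, Prod.mk_add_mk,
      show (0 : V3) = ((0 : ℤ), (0 : ℤ), (0 : ℤ)) from rfl, Prod.mk.injEq] at h
    exact absurd h.2.2 (by omega)

lemma torsionfree (p : HW) (n : ℕ) (hn : 0 < n) (h : p ^ n = 1) : p = 1 := by
  have h2 : (p ^ 2) ^ n = 1 := by
    rw [← pow_mul, mul_comm, pow_mul, h, one_pow]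
  rw [sq_eq, pow_trans] at h2
  have hn' : (n : ℤ) ≠ 0 := by exact_mod_cast hn.ne'
  rcases hm : (p.v + act p.x p.v + cc p.x p.x) with ⟨w1, w2, w3⟩
  rw [hm] at h2
  have hv : (n • ((w1, w2, w3) : V3)) = (0 : V3) := ((HW.mk.injEq _ _ _ _).mp h2).1
  simp only [Prod.smul_mk, nsmul_eq_mul,
    show (0 : V3) = ((0 : ℤ), (0 : ℤ), (0 : ℤ)) from rfl, Prod.mk.injEq] at hv
  have hw : ((w1, w2, w3) : V3) = 0 := by
    have e1 := (mul_eq_zero.mp hv.1).resolve_left hn'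
    have e2 := (mul_eq_zero.mp hv.2.1).resolve_left hn'
    have e3 := (mul_eq_zero.mp hv.2.2).resolve_left hn'
    simp [e1, e2, e3]
  have := crux p.v p.x (hm.trans hw)
  exact this

end HW
end HWaux

namespace HWaux

abbrev P := PresentedGroup promislowRels

def pa : P := PresentedGroup.of 0
def pb : P := PresentedGroup.of 1

lemma rel_one {r : FreeGroup (Fin 2)} (hr : r ∈ promislowRels) :
    PresentedGroup.mk promislowRels r = 1 :=
  (QuotientGroup.eq_one_iff _).2 (Subgroup.subset_normalClosure hr)

lemma R1 : pb⁻¹ * pa ^ 2 * pb * pa ^ 2 = 1 := by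
  have := rel_one (r := (FreeGroup.of 1)⁻¹ * (FreeGroup.of 0) ^ 2 * FreeGroup.of 1 *
    (FreeGroup.of 0) ^ 2) (Or.inl rfl)
  simp only [map_mul, map_inv, map_pow] at this
  exact this

lemma R2 : pa⁻¹ * pb ^ 2 * pa * pb ^ 2 = 1 := by
  have := rel_one (r := (FreeGroup.of 0)⁻¹ * (FreeGroup.of 1) ^ 2 * FreeGroup.of 0 *
    (FreeGroup.of 1) ^ 2) (Or.inr rfl)
  simp only [map_mul, map_inv, map_pow] at this
  exact this

section derived

lemma conj_flip {G : Type*} [Group G] {u g : G} (h : u⁻¹ * g * u = g⁻¹) :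
    u * g * u⁻¹ = g⁻¹ := by
  have h1 : g = u * g⁻¹ * u⁻¹ := by rw [← h]; group
  calc u * g * u⁻¹ = (u * g⁻¹ * u⁻¹)⁻¹ := by group
    _ = g⁻¹ := by rw [← h1]

lemma conj_inv {G : Type*} [Group G] {u g h : G} (H : u * g * u⁻¹ = h) :
    u * g⁻¹ * u⁻¹ = h⁻¹ := by rw [← H]; group

lemma conj_zpow {G : Type*} [Group G] {u g h : G} (H : u * g * u⁻¹ = h) (n : ℤ) :
    u * g ^ n * u⁻¹ = h ^ n := by
  have h3 : (MulAut.conj u) (g ^ n) = ((MulAut.conj u) g) ^ n := map_zpow _ _ _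
  simpa [MulAut.conj_apply, H] using h3

lemma conj_zpow_inv {G : Type*} [Group G] {u g : G} (H : u * g * u⁻¹ = g⁻¹) (n : ℤ) :
    u * g ^ n = g ^ (-n) * u := by
  have h2 : u * g ^ n * u⁻¹ = g ^ (-n) := by
    rw [conj_zpow H n, zpow_neg, inv_zpow]
  rw [← h2]; group

-- the basic conjugation relations
lemma hA' : pb⁻¹ * pa ^ 2 * pb = (pa ^ 2)⁻¹ := eq_inv_of_mul_eq_one_left R1
lemma hB' : pa⁻¹ * pb ^ 2 * pa = (pb ^ 2)⁻¹ := eq_inv_of_mul_eq_one_left R2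
lemma hA : pb * pa ^ 2 * pb⁻¹ = (pa ^ 2)⁻¹ := conj_flip hA'
lemma hB : pa * pb ^ 2 * pa⁻¹ = (pb ^ 2)⁻¹ := conj_flip hB'

-- rearranged forms
lemma e1 : pa ^ 2 * pb = pb * (pa ^ 2)⁻¹ := by rw [← hA']; group
lemma e2 : pb ^ 2 * pa⁻¹ = pa⁻¹ * (pb ^ 2)⁻¹ := by rw [← hB]; group
lemma e2' : pa⁻¹ * pb ^ 2 = (pb ^ 2)⁻¹ * pa⁻¹ := by rw [← hB']; group
lemma e1b : pb ^ 2 * pa = pa * (pb ^ 2)⁻¹ := by rw [← hB']; group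
lemma e2a : pa ^ 2 * pb⁻¹ = pb⁻¹ * (pa ^ 2)⁻¹ := by rw [← hA]; group

lemma e3 : pb * pa⁻¹ * pb = pb⁻¹ * pa⁻¹ * pb⁻¹ := by
  rw [show pb⁻¹ * pa⁻¹ * pb⁻¹ = pb⁻¹ * (pa⁻¹ * (pb ^ 2)⁻¹) * pb from by group, ← e2]
  group

lemma e3b : pa * pb⁻¹ * pa = pa⁻¹ * pb⁻¹ * pa⁻¹ := by
  calc pa * pb⁻¹ * pa = pa⁻¹ * (pa ^ 2 * pb⁻¹) * pa := by group
    _ = pa⁻¹ * (pb⁻¹ * (pa ^ 2)⁻¹) * pa := by rw [e2a]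
    _ = pa⁻¹ * pb⁻¹ * pa⁻¹ := by group

lemma e3c : pb * pa * pb = pb⁻¹ * pa * pb⁻¹ := by
  calc pb * pa * pb = pb⁻¹ * (pb ^ 2 * pa) * pb := by group
    _ = pb⁻¹ * (pa * (pb ^ 2)⁻¹) * pb := by rw [e1b]
    _ = pb⁻¹ * pa * pb⁻¹ := by group

lemma hK_a : pa * (pa * pb) ^ 2 * pa⁻¹ = ((pa * pb) ^ 2)⁻¹ := by
  calc pa * (pa * pb) ^ 2 * pa⁻¹ = (pa ^ 2 * pb) * (pa * pb * pa⁻¹) := by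
        simp only [pow_two]; group
    _ = (pb * (pa ^ 2)⁻¹) * (pa * pb * pa⁻¹) := by rw [e1]
    _ = (pb * pa⁻¹ * pb) * pa⁻¹ := by simp only [pow_two]; group
    _ = (pb⁻¹ * pa⁻¹ * pb⁻¹) * pa⁻¹ := by rw [e3]
    _ = ((pa * pb) ^ 2)⁻¹ := by simp only [pow_two, mul_inv_rev]; group

lemma hK_b : pb * (pa * pb) ^ 2 * pb⁻¹ = ((pa * pb) ^ 2)⁻¹ := by
  calc pb * (pa * pb) ^ 2 * pb⁻¹ = (pb * pa * pb) * pa := by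
        simp only [pow_two]; group
    _ = (pb⁻¹ * pa * pb⁻¹) * pa := by rw [e3c]
    _ = pb⁻¹ * (pa * pb⁻¹ * pa) := by group
    _ = pb⁻¹ * (pa⁻¹ * pb⁻¹ * pa⁻¹) := by rw [e3b]
    _ = ((pa * pb) ^ 2)⁻¹ := by simp only [pow_two, mul_inv_rev]; group

lemma W1 : pa * (pa * pb)⁻¹ = pa ^ 2 * (pa * pb) ^ 2 * pb := by
  symm
  calc pa ^ 2 * (pa * pb) ^ 2 * pb
      = pa * (pa ^ 2 * pb) * (pa * pb ^ 2) := by simp only [pow_two]; group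
    _ = pa * (pb * (pa ^ 2)⁻¹) * (pa * pb ^ 2) := by rw [e1]
    _ = pa * pb * (pa⁻¹ * pb ^ 2) := by simp only [pow_two]; group
    _ = pa * pb * ((pb ^ 2)⁻¹ * pa⁻¹) := by rw [e2']
    _ = pa * (pa * pb)⁻¹ := by simp only [pow_two, mul_inv_rev]; group

lemma W2 : pb * pa = (pa ^ 2)⁻¹ * pb ^ 2 * (pa * pb)⁻¹ := by
  calc pb * pa = (pa ^ 2)⁻¹ * ((pa ^ 2 * pb) * pa) := by simp only [pow_two]; group
    _ = (pa ^ 2)⁻¹ * ((pb * (pa ^ 2)⁻¹) * pa) := by rw [e1]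
    _ = (pa ^ 2)⁻¹ * pb ^ 2 * (pa * pb)⁻¹ := by simp only [pow_two, mul_inv_rev]; group

-- named group elements
def A : P := pa ^ 2
def B : P := pb ^ 2
def K : P := ((pa * pb) ^ 2)⁻¹

lemma haK : pa * K * pa⁻¹ = K⁻¹ := by
  have h := conj_inv hK_a
  rw [inv_inv] at h
  show pa * ((pa * pb) ^ 2)⁻¹ * pa⁻¹ = (((pa * pb) ^ 2)⁻¹)⁻¹
  rw [h, inv_inv]

lemma hbK : pb * K * pb⁻¹ = K⁻¹ := by
  have h := conj_inv hK_b
  rw [inv_inv] at h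
  show pb * ((pa * pb) ^ 2)⁻¹ * pb⁻¹ = (((pa * pb) ^ 2)⁻¹)⁻¹
  rw [h, inv_inv]

lemma haA : pa * A * pa⁻¹ = A := by rw [A]; group
lemma hbB : pb * B * pb⁻¹ = B := by rw [B]; group
lemma haB : pa * B * pa⁻¹ = B⁻¹ := hB
lemma hbA : pb * A * pb⁻¹ = A⁻¹ := hA

lemma cAB : Commute A B := by
  refine mul_inv_eq_iff_eq_mul.mp ?_
  calc A * B * A⁻¹ = pa * (pa * B * pa⁻¹) * pa⁻¹ := by rw [A, B]; simp only [pow_two]; group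
    _ = pa * B⁻¹ * pa⁻¹ := by rw [haB]
    _ = B := by rw [conj_inv haB, inv_inv]

lemma cAK : Commute A K := by
  refine mul_inv_eq_iff_eq_mul.mp ?_
  calc A * K * A⁻¹ = pa * (pa * K * pa⁻¹) * pa⁻¹ := by rw [A]; simp only [pow_two]; group
    _ = pa * K⁻¹ * pa⁻¹ := by rw [haK]
    _ = K := by rw [conj_inv haK, inv_inv]

lemma cBK : Commute B K := by
  refine mul_inv_eq_iff_eq_mul.mp ?_
  calc B * K * B⁻¹ = pb * (pb * K * pb⁻¹) * pb⁻¹ := by rw [B]; simp only [pow_two]; group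
    _ = pb * K⁻¹ * pb⁻¹ := by rw [hbK]
    _ = K := by rw [conj_inv hbK, inv_inv]

/-- abelian translation part -/
def T (v : V3) : P := A ^ v.1 * B ^ v.2.1 * K ^ v.2.2

lemma T_add (u v : V3) : T (u + v) = T u * T v := by
  show A ^ (u.1 + v.1) * B ^ (u.2.1 + v.2.1) * K ^ (u.2.2 + v.2.2) =
    A ^ u.1 * B ^ u.2.1 * K ^ u.2.2 * (A ^ v.1 * B ^ v.2.1 * K ^ v.2.2)
  symm
  have h1 : Commute (K ^ u.2.2) (A ^ v.1 * B ^ v.2.1) :=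
    ((cAK.symm).zpow_zpow u.2.2 v.1).mul_right ((cBK.symm).zpow_zpow u.2.2 v.2.1)
  have h2 : Commute (B ^ u.2.1) (A ^ v.1) := (cAB.zpow_zpow v.1 u.2.1).symm
  calc A ^ u.1 * B ^ u.2.1 * K ^ u.2.2 * (A ^ v.1 * B ^ v.2.1 * K ^ v.2.2)
      = (A ^ u.1 * B ^ u.2.1) * K ^ u.2.2 * ((A ^ v.1 * B ^ v.2.1) * K ^ v.2.2) := by
        group
    _ = (A ^ u.1 * B ^ u.2.1) * (A ^ v.1 * B ^ v.2.1) * (K ^ u.2.2 * K ^ v.2.2) := by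
        rw [h1.mul_mul_mul_comm]
    _ = (A ^ u.1 * (B ^ u.2.1 * A ^ v.1) * B ^ v.2.1) * (K ^ u.2.2 * K ^ v.2.2) := by
        group
    _ = (A ^ u.1 * (A ^ v.1 * B ^ u.2.1) * B ^ v.2.1) * (K ^ u.2.2 * K ^ v.2.2) := by
        rw [h2.eq]
    _ = A ^ (u.1 + v.1) * B ^ (u.2.1 + v.2.1) * K ^ (u.2.2 + v.2.2) := by
        rw [zpow_add, zpow_add, zpow_add]; group

lemma T_zero : T 0 = 1 := by
  show A ^ (0 : ℤ) * B ^ (0 : ℤ) * K ^ (0 : ℤ) = 1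
  simp

/-- coset representatives -/
def w (x : K4) : P :=
  if x = 0 then 1 else if x = (1, 0) then pa else if x = (0, 1) then pb else (pa * pb)⁻¹

lemma w_zero : w 0 = 1 := if_pos rfl
lemma w_a : w (1, 0) = pa := by rw [w, if_neg (by decide), if_pos rfl]
lemma w_b : w (0, 1) = pb := by rw [w, if_neg (by decide), if_neg (by decide), if_pos rfl]
lemma w_ab : w (1, 1) = (pa * pb)⁻¹ := by
  rw [w, if_neg (by decide), if_neg (by decide), if_neg (by decide)]

/-- the retraction (as a function) -/
def σ (p : HW) : P := T p.v * w p.x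

lemma σ_one : σ 1 = 1 := by
  show T 0 * w 0 = 1
  rw [T_zero, w_zero, mul_one]

-- moving generators across T
lemma maA (n : ℤ) : pa * A ^ n = A ^ n * pa :=
  (((Commute.refl pa).pow_right 2).zpow_right n).eq
lemma maB (n : ℤ) : pa * B ^ n = B ^ (-n) * pa := conj_zpow_inv haB n
lemma maK (n : ℤ) : pa * K ^ n = K ^ (-n) * pa := conj_zpow_inv haK n
lemma mbA (n : ℤ) : pb * A ^ n = A ^ (-n) * pb := conj_zpow_inv hbA n
lemma mbB (n : ℤ) : pb * B ^ n = B ^ n * pb :=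
  (((Commute.refl pb).pow_right 2).zpow_right n).eq
lemma mbK (n : ℤ) : pb * K ^ n = K ^ (-n) * pb := conj_zpow_inv hbK n

lemma aT (m : V3) : pa * T m = T (act ((1, 0) : K4) m) * pa := by
  have hact : act ((1, 0) : K4) m = (m.1, -m.2.1, -m.2.2) := by
    have hs : sv ((1, 0) : K4) = (1, -1, -1) := by decide
    simp [act, hs]
  rw [hact]
  show pa * (A ^ m.1 * B ^ m.2.1 * K ^ m.2.2) = A ^ m.1 * B ^ (-m.2.1) * K ^ (-m.2.2) * pa
  calc pa * (A ^ m.1 * B ^ m.2.1 * K ^ m.2.2)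
      = (pa * A ^ m.1) * B ^ m.2.1 * K ^ m.2.2 := by group
    _ = (A ^ m.1 * pa) * B ^ m.2.1 * K ^ m.2.2 := by rw [maA]
    _ = A ^ m.1 * (pa * B ^ m.2.1) * K ^ m.2.2 := by group
    _ = A ^ m.1 * (B ^ (-m.2.1) * pa) * K ^ m.2.2 := by rw [maB]
    _ = A ^ m.1 * B ^ (-m.2.1) * (pa * K ^ m.2.2) := by group
    _ = A ^ m.1 * B ^ (-m.2.1) * (K ^ (-m.2.2) * pa) := by rw [maK]
    _ = A ^ m.1 * B ^ (-m.2.1) * K ^ (-m.2.2) * pa := by group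

lemma bT (m : V3) : pb * T m = T (act ((0, 1) : K4) m) * pb := by
  have hact : act ((0, 1) : K4) m = (-m.1, m.2.1, -m.2.2) := by
    have hs : sv ((0, 1) : K4) = (-1, 1, -1) := by decide
    simp [act, hs]
  rw [hact]
  show pb * (A ^ m.1 * B ^ m.2.1 * K ^ m.2.2) = A ^ (-m.1) * B ^ m.2.1 * K ^ (-m.2.2) * pb
  calc pb * (A ^ m.1 * B ^ m.2.1 * K ^ m.2.2)
      = (pb * A ^ m.1) * B ^ m.2.1 * K ^ m.2.2 := by group
    _ = (A ^ (-m.1) * pb) * B ^ m.2.1 * K ^ m.2.2 := by rw [mbA]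
    _ = A ^ (-m.1) * (pb * B ^ m.2.1) * K ^ m.2.2 := by group
    _ = A ^ (-m.1) * (B ^ m.2.1 * pb) * K ^ m.2.2 := by rw [mbB]
    _ = A ^ (-m.1) * B ^ m.2.1 * (pb * K ^ m.2.2) := by group
    _ = A ^ (-m.1) * B ^ m.2.1 * (K ^ (-m.2.2) * pb) := by rw [mbK]
    _ = A ^ (-m.1) * B ^ m.2.1 * K ^ (-m.2.2) * pb := by group

-- the sixteen coset cases (eight nontrivial)
lemma wa_case (x : K4) : T (cc (1, 0) x) * w ((1, 0) + x) = pa * w x := by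
  rcases HW.k4_cases x with rfl | rfl | rfl | rfl
  · rw [show ((1, 0) : K4) + 0 = (1, 0) from by decide, cc_zero_right, T_zero, one_mul,
      w_zero, mul_one, w_a]
  · rw [show ((1, 0) : K4) + (1, 0) = 0 from by decide,
      show cc (1, 0) (1, 0) = ((1 : ℤ), (0 : ℤ), (0 : ℤ)) from by decide, w_zero, w_a, mul_one]
    show A ^ (1 : ℤ) * B ^ (0 : ℤ) * K ^ (0 : ℤ) = pa * pa
    rw [A, pow_two]; group
  · rw [show ((1, 0) : K4) + (0, 1) = (1, 1) from by decide,
      show cc (1, 0) (0, 1) = ((0 : ℤ), (0 : ℤ), (-1 : ℤ)) from by decide, w_ab, w_b]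
    show A ^ (0 : ℤ) * B ^ (0 : ℤ) * K ^ (-1 : ℤ) * (pa * pb)⁻¹ = pa * pb
    rw [K]
    simp only [zpow_neg, zpow_one, inv_inv, zpow_zero, one_mul, mul_one, pow_two]
    group
  · rw [show ((1, 0) : K4) + (1, 1) = (0, 1) from by decide,
      show cc (1, 0) (1, 1) = ((1 : ℤ), (0 : ℤ), (-1 : ℤ)) from by decide, w_b, w_ab]
    show A ^ (1 : ℤ) * B ^ (0 : ℤ) * K ^ (-1 : ℤ) * pb = pa * (pa * pb)⁻¹
    have hA1 : A ^ (1 : ℤ) = pa ^ 2 := by rw [A, zpow_one]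
    have hK1 : K ^ (-1 : ℤ) = (pa * pb) ^ 2 := by rw [K, zpow_neg, zpow_one, inv_inv]
    rw [hA1, hK1, W1, zpow_zero, mul_one]

lemma wb_case (x : K4) : T (cc (0, 1) x) * w ((0, 1) + x) = pb * w x := by
  rcases HW.k4_cases x with rfl | rfl | rfl | rfl
  · rw [show ((0, 1) : K4) + 0 = (0, 1) from by decide, cc_zero_right, T_zero, one_mul,
      w_zero, mul_one, w_b]
  · rw [show ((0, 1) : K4) + (1, 0) = (1, 1) from by decide,
      show cc (0, 1) (1, 0) = ((-1 : ℤ), (1 : ℤ), (0 : ℤ)) from by decide, w_ab, w_a]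
    show A ^ (-1 : ℤ) * B ^ (1 : ℤ) * K ^ (0 : ℤ) * (pa * pb)⁻¹ = pb * pa
    have hA1 : A ^ (-1 : ℤ) = (pa ^ 2)⁻¹ := by rw [A, zpow_neg, zpow_one]
    have hB1 : B ^ (1 : ℤ) = pb ^ 2 := by rw [B, zpow_one]
    rw [hA1, hB1, zpow_zero, mul_one, W2]
  · rw [show ((0, 1) : K4) + (0, 1) = 0 from by decide,
      show cc (0, 1) (0, 1) = ((0 : ℤ), (1 : ℤ), (0 : ℤ)) from by decide, w_zero, w_b, mul_one]
    show A ^ (0 : ℤ) * B ^ (1 : ℤ) * K ^ (0 : ℤ) = pb * pb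
    rw [B, pow_two]; group
  · rw [show ((0, 1) : K4) + (1, 1) = (1, 0) from by decide,
      show cc (0, 1) (1, 1) = ((-1 : ℤ), (0 : ℤ), (0 : ℤ)) from by decide, w_a, w_ab]
    show A ^ (-1 : ℤ) * B ^ (0 : ℤ) * K ^ (0 : ℤ) * pa = pb * (pa * pb)⁻¹
    rw [A]
    simp only [zpow_neg, zpow_one, zpow_zero, mul_one, pow_two, mul_inv_rev]
    group

def aH : HW := ⟨0, (1, 0)⟩
def bH : HW := ⟨0, (0, 1)⟩

lemma La (p : HW) : σ (aH * p) = pa * σ p := by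
  rcases p with ⟨m, x⟩
  show T ((0 : V3) + act (1, 0) m + cc (1, 0) x) * w ((1, 0) + x) = pa * (T m * w x)
  rw [zero_add]
  calc T (act (1, 0) m + cc (1, 0) x) * w ((1, 0) + x)
      = T (act (1, 0) m) * (T (cc (1, 0) x) * w ((1, 0) + x)) := by
        rw [T_add, mul_assoc]
    _ = T (act (1, 0) m) * (pa * w x) := by rw [wa_case]
    _ = (T (act (1, 0) m) * pa) * w x := by rw [mul_assoc]
    _ = (pa * T m) * w x := by rw [aT]
    _ = pa * (T m * w x) := by rw [mul_assoc]

lemma Lb (p : HW) : σ (bH * p) = pb * σ p := by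
  rcases p with ⟨m, x⟩
  show T ((0 : V3) + act (0, 1) m + cc (0, 1) x) * w ((0, 1) + x) = pb * (T m * w x)
  rw [zero_add]
  calc T (act (0, 1) m + cc (0, 1) x) * w ((0, 1) + x)
      = T (act (0, 1) m) * (T (cc (0, 1) x) * w ((0, 1) + x)) := by
        rw [T_add, mul_assoc]
    _ = T (act (0, 1) m) * (pb * w x) := by rw [wb_case]
    _ = (T (act (0, 1) m) * pb) * w x := by rw [mul_assoc]
    _ = (pb * T m) * w x := by rw [bT]
    _ = pb * (T m * w x) := by rw [mul_assoc]

lemma La' (p : HW) : σ (aH⁻¹ * p) = pa⁻¹ * σ p := by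
  have h := La (aH⁻¹ * p)
  rw [← mul_assoc, mul_inv_cancel, one_mul] at h
  rw [h, inv_mul_cancel_left]

lemma Lb' (p : HW) : σ (bH⁻¹ * p) = pb⁻¹ * σ p := by
  have h := Lb (bH⁻¹ * p)
  rw [← mul_assoc, mul_inv_cancel, one_mul] at h
  rw [h, inv_mul_cancel_left]

-- the homomorphism into the concrete group
def fH : Fin 2 → HW := ![aH, bH]

lemma relcheck : ∀ r ∈ promislowRels, FreeGroup.lift fH r = 1 := by
  intro r hr
  rcases hr with rfl | hr
  · simp only [map_mul, map_inv, map_pow, FreeGroup.lift_apply_of, fH,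
      Matrix.cons_val_zero, Matrix.cons_val_one, Matrix.head_cons]
    decide
  · rw [Set.mem_singleton_iff] at hr
    subst hr
    simp only [map_mul, map_inv, map_pow, FreeGroup.lift_apply_of, fH,
      Matrix.cons_val_zero, Matrix.cons_val_one, Matrix.head_cons]
    decide

def φ : P →* HW := PresentedGroup.toGroup relcheck

lemma φ_of (i : Fin 2) :
    φ (PresentedGroup.mk promislowRels (FreeGroup.of i)) = fH i :=
  PresentedGroup.toGroup.of relcheck

lemma Lgen (i : Fin 2) (q : HW) :
    σ (fH i * q) = PresentedGroup.mk promislowRels (FreeGroup.of i) * σ q :=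
  match i with
  | 0 => La q
  | 1 => Lb q

lemma Lgen' (i : Fin 2) (q : HW) :
    σ ((fH i)⁻¹ * q) = (PresentedGroup.mk promislowRels (FreeGroup.of i))⁻¹ * σ q :=
  match i with
  | 0 => La' q
  | 1 => Lb' q


lemma sect1 : ∀ L : List (Fin 2 × Bool),
    σ (φ (PresentedGroup.mk promislowRels (FreeGroup.mk L))) =
      PresentedGroup.mk promislowRels (FreeGroup.mk L) := by
  intro L
  induction L with
  | nil =>
    have h0 : FreeGroup.mk ([] : List (Fin 2 × Bool)) = 1 := rfl
    rw [h0, map_one, map_one, σ_one]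
  | cons hd tl ih =>
    rcases hd with ⟨i, bb⟩
    have hsplit : FreeGroup.mk ((i, bb) :: tl) =
        FreeGroup.mk [(i, bb)] * FreeGroup.mk tl := by
      rw [FreeGroup.mul_mk]
      rfl
    rw [hsplit, map_mul, map_mul]
    cases bb
    · have hletter : FreeGroup.mk [(i, false)] = (FreeGroup.of i)⁻¹ := by
        symm
        rw [show FreeGroup.of i = FreeGroup.mk [(i, true)] from rfl, FreeGroup.inv_mk]
        rfl
      rw [hletter, map_inv, map_inv, φ_of, Lgen', ih]
    · have hletter : FreeGroup.mk [(i, true)] = FreeGroup.of i := rfl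
      rw [hletter, φ_of, Lgen, ih]

lemma sect (g : P) : σ (φ g) = g := by
  induction g using PresentedGroup.induction_on with
  | H z =>
    induction z using Quot.inductionOn with
    | h L => exact sect1 L

end derived
end HWaux

/-- The Promislow group `P` is torsion-free. -/
theorem promislow_torsionFree :
    ∀ g : PresentedGroup promislowRels, g ≠ 1 → ¬IsOfFinOrder g := by
  intro g hg hfin
  obtain ⟨n, hn, hpow⟩ := isOfFinOrder_iff_pow_eq_one.mp hfin
  have h1 : (HWaux.φ g) ^ n = 1 := by rw [← map_pow, hpow, map_one]
  have h2 : HWaux.φ g = 1 := HWaux.HW.torsionfree _ n hn h1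
  have h3 := HWaux.sect g
  rw [h2, HWaux.σ_one] at h3
  exact hg h3.symm
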